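/- Let π: G̃ → G be an M-lift of the factor graph of the packing LP, and let x̃ be a valid assignment for the lifted problem, i.e., 0 ≤ x̃_ṽ ≤ X_{π(ṽ)} for every lifted variable vertex ṽ and Σ_{ũ∈N(C̃)} x̃_ũ ≤ b_{π(C̃)} for every lifted constraint vertex C̃. Then the average assignment avg(x̃), defined by avg(x̃)_v = (1/M)·Σ_{ṽ∈π^{-1}(v)} x̃_ṽ, is a feasible solution of the packing LP: avg(x̃) ∈ RBox(X) and A·avg(x̃) ≤ b. Moreover, wᵀ·avg(x̃) = (1/M)·Σ_ṽ w_{π(ṽ)}·x̃_ṽ. -/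

import Mathlib

attribute [local instance] Classical.propDecidable

/-- A covering map of (simple) graphs: a graph homomorphism `π : G' → G` whose restriction
to the neighbors of each vertex `v'` is a bijection onto the neighbors of `π v'`. -/
def IsGraphCoveringMap {V W : Type*} (G' : SimpleGraph V) (G : SimpleGraph W) (π : V → W) : Prop :=
  (∀ ⦃a b : V⦄, G'.Adj a b → G.Adj (π a) (π b)) ∧
  ∀ v : V, Set.BijOn π (G'.neighborSet v) (G.neighborSet (π v))

/-- The factor graph of the zero-one matrix `A`: a bipartite graph on variable vertices
`Fin n` (columns) and constraint vertices `Fin m` (rows), with an edge between `v_i` and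
`C_j` iff `A j i = 1`. -/
def factorGraph {n m : ℕ} (A : Matrix (Fin m) (Fin n) ℝ) : SimpleGraph (Fin n ⊕ Fin m) where
  Adj x y := (∃ i j, x = Sum.inl i ∧ y = Sum.inr j ∧ A j i = 1) ∨
             (∃ i j, x = Sum.inr j ∧ y = Sum.inl i ∧ A j i = 1)
  symm := by
    constructor
    rintro x y (⟨i, j, rfl, rfl, h⟩ | ⟨i, j, rfl, rfl, h⟩)
    · exact Or.inr ⟨i, j, rfl, rfl, h⟩
    · exact Or.inl ⟨i, j, rfl, rfl, h⟩
  loopless := by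
    constructor
    rintro x (⟨i, j, h1, h2, -⟩ | ⟨i, j, h1, h2, -⟩) <;> subst h1 <;> simp_all

/-- A valid assignment on an `M`-lift of the factor graph averages to a feasible solution of
the packing LP, and its (scaled) weight equals the LP objective of the average. -/
theorem average_of_lift_assignment_feasible (n m : ℕ)
    (A : Matrix (Fin m) (Fin n) ℝ) (hA : ∀ j i, A j i = 0 ∨ A j i = 1)
    (b : Fin m → ℝ) (hb : ∀ j, 0 ≤ b j) (w : Fin n → ℝ) (X : Fin n → ℕ)
    (V' : Type) [Finite V'] (M : ℕ) (hM : 1 ≤ M)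
    (G' : SimpleGraph V') (π : V' → Fin n ⊕ Fin m)
    (hcov : IsGraphCoveringMap G' (factorGraph A) π)
    (hfib : ∀ u : Fin n ⊕ Fin m, Nat.card (π ⁻¹' {u}) = M)
    (xt : V' → ℝ)
    (hbox : ∀ v' i, π v' = Sum.inl i → 0 ≤ xt v' ∧ xt v' ≤ (X i : ℝ))
    (hcons : ∀ c' j, π c' = Sum.inr j →
      (∑ᶠ u' : V', if G'.Adj c' u' then xt u' else 0) ≤ b j) :
    letI avg : Fin n → ℝ := fun i => (1 / (M : ℝ)) * ∑ᶠ v' ∈ π ⁻¹' {Sum.inl i}, xt v'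
    (∀ i, 0 ≤ avg i ∧ avg i ≤ (X i : ℝ)) ∧
    (∀ j, (∑ i, A j i * avg i) ≤ b j) ∧
    (∑ i, w i * avg i) =
      (1 / (M : ℝ)) * ∑ᶠ v' : V', Sum.elim w (fun _ => 0) (π v') * xt v' := by
  classical
  haveI := Fintype.ofFinite V'
  have hMpos : (0:ℝ) < M := by exact_mod_cast hM
  set fib : (Fin n ⊕ Fin m) → Finset V' := fun u => Finset.univ.filter (fun v' => π v' = u)
    with hfibdef
  have hfibmem : ∀ u v', v' ∈ fib u ↔ π v' = u := by intro u v'; simp [hfibdef]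
  have hfibset : ∀ u, (π ⁻¹' {u}) = ↑(fib u) := by
    intro u; ext v'; simp [hfibdef]
  have hfibcard : ∀ u, (fib u).card = M := by
    intro u
    have h := hfib u
    rw [Nat.card_eq_fintype_card] at h
    rw [← h, hfibdef]
    rw [← Fintype.card_subtype]
    apply Fintype.card_congr
    exact Equiv.subtypeEquivRight (by intro x; simp)
  have hsum : ∀ u (f : V' → ℝ), ∑ᶠ v' ∈ π ⁻¹' {u}, f v' = ∑ v' ∈ fib u, f v' := by
    intro u f; rw [hfibset, finsum_mem_coe_finset]
  -- key counting lemma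
  have key : ∀ (j : Fin m) (u' : V'),
      ((((fib (Sum.inr j)).filter (fun c' => G'.Adj c' u')).card : ℝ))
        = Sum.elim (fun i => A j i) (fun _ => (0:ℝ)) (π u') := by
    intro j u'
    rcases hπ : π u' with i | j'
    · rcases hA j i with h0 | h1
      · simp only [Sum.elim_inl, h0]
        norm_cast
        rw [Finset.card_eq_zero, Finset.filter_eq_empty_iff]
        intro c' hc hadj
        have hπc : π c' = Sum.inr j := (hfibmem _ _).1 hc
        have hG := hcov.1 hadj
        rw [hπc, hπ] at hG
        rcases hG with ⟨i', j'', h1', _, _⟩ | ⟨i', j'', h1', h2', h3'⟩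
        · simp at h1'
        · obtain rfl : j = j'' := by injection h1'
          obtain rfl : i = i' := by injection h2'
          rw [h0] at h3'; norm_num at h3'
      · simp only [Sum.elim_inl, h1]
        norm_cast
        rw [Finset.card_eq_one]
        have hadjG : Sum.inr j ∈ (factorGraph A).neighborSet (π u') := by
          rw [hπ]
          exact Or.inl ⟨i, j, rfl, rfl, h1⟩
        obtain ⟨c₀, hc₀mem, hc₀π⟩ := (hcov.2 u').surjOn hadjG
        refine ⟨c₀, ?_⟩
        ext c'
        simp only [Finset.mem_filter, Finset.mem_singleton, hfibdef, Finset.mem_univ, true_and]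
        constructor
        · rintro ⟨hπc, hadj⟩
          exact (hcov.2 u').injOn (G'.adj_symm hadj) hc₀mem (hπc.trans hc₀π.symm)
        · rintro rfl
          exact ⟨hc₀π, G'.adj_symm hc₀mem⟩
    · simp only [Sum.elim_inr]
      norm_cast
      rw [Finset.card_eq_zero, Finset.filter_eq_empty_iff]
      intro c' hc hadj
      have hπc : π c' = Sum.inr j := (hfibmem _ _).1 hc
      have hG := hcov.1 hadj
      rw [hπc, hπ] at hG
      rcases hG with ⟨i', j'', h1', _, _⟩ | ⟨i', j'', _, h2', _⟩
      · simp at h1'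
      · simp at h2'
  -- fiberwise decomposition of weighted sums
  have hfiber : ∀ (c : Fin n → ℝ),
      (∑ u' : V', Sum.elim c (fun _ => (0:ℝ)) (π u') * xt u')
        = ∑ i, c i * ∑ v' ∈ fib (Sum.inl i), xt v' := by
    intro c
    rw [← Finset.sum_fiberwise Finset.univ π (fun u' => Sum.elim c (fun _ => (0:ℝ)) (π u') * xt u')]
    rw [Fintype.sum_sum_type]
    have h2 : ∀ j : Fin m,
        (∑ u' ∈ Finset.univ.filter (fun u' => π u' = Sum.inr j),
          Sum.elim c (fun _ => (0:ℝ)) (π u') * xt u') = 0 := by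
      intro j
      apply Finset.sum_eq_zero
      intro u' hu'
      rw [Finset.mem_filter] at hu'
      rw [hu'.2]; simp
    rw [Finset.sum_congr rfl (fun j _ => h2 j), Finset.sum_const_zero, add_zero]
    refine Finset.sum_congr rfl fun i _ => ?_
    rw [Finset.mul_sum]
    refine Finset.sum_congr rfl fun u' hu' => ?_
    rw [Finset.mem_filter] at hu'
    rw [hu'.2]; simp
  refine ⟨?_, ?_, ?_⟩
  · intro i
    have hs := hsum (Sum.inl i) xt
    have h0 : (0:ℝ) ≤ ∑ v' ∈ fib (Sum.inl i), xt v' :=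
      Finset.sum_nonneg fun v' hv => (hbox v' i ((hfibmem _ _).1 hv)).1
    have h1 : ∑ v' ∈ fib (Sum.inl i), xt v' ≤ (M : ℝ) * X i := by
      calc ∑ v' ∈ fib (Sum.inl i), xt v' ≤ ∑ _v' ∈ fib (Sum.inl i), (X i : ℝ) :=
            Finset.sum_le_sum fun v' hv => (hbox v' i ((hfibmem _ _).1 hv)).2
        _ = (M : ℝ) * X i := by
            rw [Finset.sum_const, hfibcard, nsmul_eq_mul]
    constructor
    · show (0:ℝ) ≤ (1 / (M : ℝ)) * _
      rw [hs]
      positivity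
    · show (1 / (M : ℝ)) * _ ≤ _
      rw [hs, one_div, inv_mul_le_iff₀ hMpos]
      exact h1
  · intro j
    have hS : ∑ c' ∈ fib (Sum.inr j), (∑ u' : V', if G'.Adj c' u' then xt u' else 0)
        ≤ (M : ℝ) * b j := by
      calc ∑ c' ∈ fib (Sum.inr j), (∑ u' : V', if G'.Adj c' u' then xt u' else 0)
          ≤ ∑ _c' ∈ fib (Sum.inr j), b j := by
            refine Finset.sum_le_sum fun c' hc => ?_
            have h := hcons c' j ((hfibmem _ _).1 hc)
            rwa [finsum_eq_sum_of_fintype] at h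
        _ = (M : ℝ) * b j := by rw [Finset.sum_const, hfibcard, nsmul_eq_mul]
    have hswap : ∑ c' ∈ fib (Sum.inr j), (∑ u' : V', if G'.Adj c' u' then xt u' else 0)
        = ∑ i, A j i * ∑ v' ∈ fib (Sum.inl i), xt v' := by
      rw [Finset.sum_comm, ← hfiber (fun i => A j i)]
      refine Finset.sum_congr rfl fun u' _ => ?_
      rw [Finset.sum_ite, Finset.sum_const_zero, add_zero, Finset.sum_const, nsmul_eq_mul,
        key j u']
    have : (∑ i, A j i * ((1 / (M : ℝ)) * ∑ᶠ v' ∈ π ⁻¹' {Sum.inl i}, xt v'))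
        = (1 / (M : ℝ)) * ∑ i, A j i * ∑ v' ∈ fib (Sum.inl i), xt v' := by
      rw [Finset.mul_sum]
      refine Finset.sum_congr rfl fun i _ => ?_
      show A j i * ((1 / (M : ℝ)) * _) = _
      rw [hsum (Sum.inl i) xt]; ring
    rw [this, ← hswap, one_div, inv_mul_le_iff₀ hMpos]
    exact hS
  · rw [finsum_eq_sum_of_fintype, hfiber w, Finset.mul_sum]
    refine Finset.sum_congr rfl fun i _ => ?_
    show w i * ((1 / (M : ℝ)) * _) = _
    rw [hsum (Sum.inl i) xt]; ring
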